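/- Let f : [0,∞) → ℝ be C² with only finitely many zeros and f(0) ≥ 0. Then f admits a representation f(y) = f⁺(y) + y·f⁻(y) where f⁺, f⁻ are C¹ on [0,∞), f⁺(y) ≥ 0 for all y ≥ 0, and f⁻(y) ≤ 0 for all y ≥ 0. -/

import Mathlib

open Set

theorem representation_theorem (f : ℝ → ℝ)
    (hf : ContDiffOn ℝ 2 f (Ici 0))
    (hzeros : {y : ℝ | 0 ≤ y ∧ f y = 0}.Finite)
    (hf0 : 0 ≤ f 0) :
    ∃ fp fm : ℝ → ℝ,
      ContDiffOn ℝ 1 fp (Ici 0) ∧ ContDiffOn ℝ 1 fm (Ici 0) ∧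
      (∀ y ≥ (0:ℝ), f y = fp y + y * fm y) ∧
      (∀ y ≥ (0:ℝ), 0 ≤ fp y) ∧
      (∀ y ≥ (0:ℝ), fm y ≤ 0) := by
  have hf1 : ContDiffOn ℝ 1 f (Ici 0) := hf.of_le (by norm_num)
  have hf1' : ContDiffOn ℝ 1 f (Icc (0:ℝ) 1) := hf1.mono (Icc_subset_Ici_self)
  have hud : UniqueDiffOn ℝ (Icc (0:ℝ) 1) := uniqueDiffOn_Icc one_pos
  have hdiff : DifferentiableOn ℝ f (Icc (0:ℝ) 1) := hf1'.differentiableOn one_ne_zero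
  have hcont : ContinuousOn (derivWithin f (Icc (0:ℝ) 1)) (Icc (0:ℝ) 1) :=
    hf1'.continuousOn_derivWithin hud le_rfl
  obtain ⟨K, hK⟩ := (isCompact_Icc (a := (0:ℝ)) (b := 1)).exists_bound_of_continuousOn hcont
  have hK0 : 0 ≤ K := le_trans (norm_nonneg _) (hK 0 (by norm_num))
  have hlip : ∀ y ∈ Icc (0:ℝ) 1, ‖f y - f 0‖ ≤ K * (y - 0) := fun y hy =>
    norm_image_sub_le_of_norm_deriv_le_segment hdiff
      (fun x hx => hK x (Ico_subset_Icc_self hx)) y hy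
  refine ⟨fun y => f y + y * ((K + 1) * (1 + f y ^ 2)),
    fun y => -((K + 1) * (1 + f y ^ 2)), ?_, ?_, ?_, ?_, ?_⟩
  · exact hf1.add ((contDiffOn_id).mul ((contDiffOn_const).mul
      ((contDiffOn_const).add (hf1.pow 2))))
  · exact (((contDiffOn_const).mul ((contDiffOn_const).add (hf1.pow 2)))).neg
  · intro y hy; ring
  · intro y hy
    show 0 ≤ f y + y * ((K + 1) * (1 + f y ^ 2))
    have hsq : (0:ℝ) ≤ f y ^ 2 := sq_nonneg _
    rcases le_or_gt y 1 with h1 | h1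
    · have := hlip y ⟨hy, h1⟩
      rw [Real.norm_eq_abs] at this
      have h2 : f 0 - f y ≤ K * y := by
        have := neg_le_of_abs_le this; linarith
      have h3 : K * y ≤ y * ((K + 1) * (1 + f y ^ 2)) := by
        nlinarith [mul_nonneg hy hsq, mul_nonneg (mul_nonneg hy hK0) hsq]
      linarith
    · have h4 : -(f y) ≤ (1 + f y ^ 2) / 2 := by nlinarith [sq_nonneg (f y + 1)]
      have h5 : (1 + f y ^ 2) / 2 ≤ y * ((K + 1) * (1 + f y ^ 2)) := by
        nlinarith [mul_nonneg hK0 hsq, mul_nonneg (mul_nonneg hy.le hK0) hsq, sq_nonneg (f y)]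
      linarith
  · intro y hy
    show -((K + 1) * (1 + f y ^ 2)) ≤ 0
    have hsq : (0:ℝ) ≤ f y ^ 2 := sq_nonneg _
    nlinarith
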